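/- arXiv:2112.13323 — 3 statements merged into one kernel-verified Lean document; each statement's English description precedes it below -/
import Mathlib

section
/- For w > 0, B > 0, if 0 < L < (B/w)·ln 2 then the derivative of q̂(L) = (1 − exp(−w·L/B))^L with respect to L is strictly negative; that is, q̂ is strictly decreasing on (0, (B/w)·ln 2). -/
open Real

private lemma iou_exp_lt {t : ℝ} (ht0 : 0 < t) (ht1 : t < Real.log 2) :
    2 * Real.exp (-t) < 2 - t := by
  have h1 : t + 1 < Real.exp t := Real.add_one_lt_exp (ne_of_gt ht0)
  have h2 : Real.exp t * Real.exp (-t) = 1 := by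
    rw [← Real.exp_add]; simp
  have h3 : (0:ℝ) < Real.exp (-t) := Real.exp_pos _
  have h4 : (2:ℝ)⁻¹ < Real.exp (-t) := by
    have : Real.exp (-Real.log 2) < Real.exp (-t) := Real.exp_lt_exp.mpr (by linarith)
    rwa [Real.exp_neg, Real.exp_log (by norm_num)] at this
  nlinarith [mul_lt_mul_of_pos_right h1 h3]

/-- The key inequality. -/
private lemma iou_key {t : ℝ} (ht0 : 0 < t) (ht1 : t < Real.log 2) :
    t * Real.exp (-t) + (1 - Real.exp (-t)) * Real.log (1 - Real.exp (-t)) < 0 := by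
  set h : ℝ → ℝ := fun s => Real.log (1 - Real.exp (-s)) + s * Real.exp (-s) / (1 - Real.exp (-s))
    with hh
  have hu : ∀ s : ℝ, 0 < s → 0 < 1 - Real.exp (-s) := by
    intro s hs
    have : Real.exp (-s) < 1 := by
      rw [Real.exp_lt_one_iff]; linarith
    linarith
  have hderiv : ∀ s : ℝ, 0 < s →
      HasDerivAt h (Real.exp (-s) * (2 - s - 2 * Real.exp (-s)) / (1 - Real.exp (-s))^2) s := by
    intro s hs
    have hus := hu s hs
    have d1 : HasDerivAt (fun s : ℝ => Real.exp (-s)) (Real.exp (-s) * (-1)) s :=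
      ((hasDerivAt_id s).neg.congr_deriv (by simp)).exp
    have du : HasDerivAt (fun s : ℝ => 1 - Real.exp (-s)) (Real.exp (-s)) s := by
      exact ((hasDerivAt_const s (1:ℝ)).sub d1).congr_deriv (by ring)
    have dlog : HasDerivAt (fun s : ℝ => Real.log (1 - Real.exp (-s)))
        (Real.exp (-s) / (1 - Real.exp (-s))) s := du.log (ne_of_gt hus)
    have dnum : HasDerivAt (fun s : ℝ => s * Real.exp (-s))
        (1 * Real.exp (-s) + s * (Real.exp (-s) * (-1))) s := (hasDerivAt_id s).mul d1
    have dfrac := dnum.div du (ne_of_gt hus)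
    have := dlog.add dfrac
    refine this.congr_deriv ?_
    field_simp
    ring
  have hmono : StrictMonoOn h (Set.Ioc 0 (Real.log 2)) := by
    apply strictMonoOn_of_deriv_pos (convex_Ioc _ _)
    · intro x hx
      exact ((hderiv x hx.1).continuousAt).continuousWithinAt
    · intro x hx
      rw [interior_Ioc] at hx
      rw [(hderiv x hx.1).deriv]
      apply div_pos
      · exact mul_pos (Real.exp_pos _) (by linarith [iou_exp_lt hx.1 hx.2])
      · have := hu x hx.1
        positivity
  have hlog2 : h (Real.log 2) = 0 := by
    have he : Real.exp (-Real.log 2) = 2⁻¹ := by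
      rw [Real.exp_neg, Real.exp_log (by norm_num)]
    simp only [hh, he]
    rw [show (1:ℝ) - 2⁻¹ = 2⁻¹ by norm_num, Real.log_inv]
    field_simp
    ring
  have hneg : h t < 0 := by
    have := hmono ⟨ht0, ht1.le⟩ ⟨Real.log_pos (by norm_num), le_refl _⟩ ht1
    linarith [hlog2 ▸ this]
  have hut := hu t ht0
  have : t * Real.exp (-t) + (1 - Real.exp (-t)) * Real.log (1 - Real.exp (-t))
      = (1 - Real.exp (-t)) * h t := by
    simp only [hh]
    field_simp
    ring
  rw [this]
  exact mul_neg_of_pos_of_neg hut hneg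

/-- For `w > 0`, `B > 0`, on `0 < L < (B/w) * log 2` the derivative of
`q̂ L = (1 - exp (-(w*L)/B)) ^ L` is strictly negative; that is, `q̂` is strictly
decreasing on `(0, (B/w) * log 2)`. -/
theorem iou_qhat_strictAntiOn (w B : ℝ) (hw : 0 < w) (hB : 0 < B) :
    (∀ L : ℝ, 0 < L → L < (B / w) * Real.log 2 →
      deriv (fun L : ℝ => (1 - Real.exp (-(w * L) / B)) ^ L) L < 0) ∧
    StrictAntiOn (fun L : ℝ => (1 - Real.exp (-(w * L) / B)) ^ L)
      (Set.Ioo 0 ((B / w) * Real.log 2)) := by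
  have hD : ∀ L : ℝ, 0 < L → L < (B / w) * Real.log 2 →
      ∃ d, HasDerivAt (fun L : ℝ => (1 - Real.exp (-(w * L) / B)) ^ L) d L ∧ d < 0 := by
    intro L hL0 hL1
    set t := w * L / B with htdef
    have ht0 : 0 < t := by positivity
    have ht1 : t < Real.log 2 := by
      rw [htdef, div_lt_iff₀ hB]
      have := mul_lt_mul_of_pos_left hL1 hw
      calc w * L < w * (B / w * Real.log 2) := this
        _ = Real.log 2 * B := by field_simp
    have hneg : -(w * L) / B = -t := by rw [htdef]; ring
    have hu : 0 < 1 - Real.exp (-(w * L) / B) := by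
      rw [hneg]
      have : Real.exp (-t) < 1 := by rw [Real.exp_lt_one_iff]; linarith
      linarith
    have d0 : HasDerivAt (fun L : ℝ => -(w * L) / B) (-(w / B)) L := by
      have : (fun L : ℝ => -(w * L) / B) = fun L : ℝ => (-(w / B)) * L := by
        funext x; ring
      rw [this]
      simpa using (hasDerivAt_id L).const_mul (-(w / B))
    have d1 : HasDerivAt (fun L : ℝ => Real.exp (-(w * L) / B))
        (Real.exp (-(w * L) / B) * (-(w / B))) L := d0.exp
    have du : HasDerivAt (fun L : ℝ => 1 - Real.exp (-(w * L) / B))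
        (-(Real.exp (-(w * L) / B) * (-(w / B)))) L := by
      exact ((hasDerivAt_const L (1:ℝ)).sub d1).congr_deriv (by ring)
    have dF := du.rpow (hasDerivAt_id L) hu
    refine ⟨_, dF, ?_⟩
    have hrw : (1 - Real.exp (-(w * L) / B)) ^ (id L : ℝ)
        = (1 - Real.exp (-(w * L) / B)) ^ ((L : ℝ) - 1) * (1 - Real.exp (-(w * L) / B)) := by
      rw [← Real.rpow_add_one (ne_of_gt hu)]
      norm_num
    have hpow : (0:ℝ) < (1 - Real.exp (-(w * L) / B)) ^ ((L : ℝ) - 1) :=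
      Real.rpow_pos_of_pos hu _
    have hkey := iou_key ht0 ht1
    rw [← hneg] at hkey
    have hinner : -(Real.exp (-(w * L) / B) * (-(w / B))) * (id L)
        + (1 - Real.exp (-(w * L) / B)) * Real.log (1 - Real.exp (-(w * L) / B)) < 0 := by
      have : -(Real.exp (-(w * L) / B) * (-(w / B))) * (id L)
          = t * Real.exp (-(w * L) / B) := by
        simp only [id]
        rw [htdef]
        field_simp
      rw [this]
      exact hkey
    calc -(Real.exp (-(w * L) / B) * (-(w / B))) * id L
          * (1 - Real.exp (-(w * L) / B)) ^ ((id L : ℝ) - 1)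
          + 1 * (1 - Real.exp (-(w * L) / B)) ^ (id L : ℝ)
            * Real.log (1 - Real.exp (-(w * L) / B))
        = (1 - Real.exp (-(w * L) / B)) ^ ((L : ℝ) - 1)
          * (-(Real.exp (-(w * L) / B) * (-(w / B))) * (id L)
            + (1 - Real.exp (-(w * L) / B)) * Real.log (1 - Real.exp (-(w * L) / B))) := by
          rw [hrw]; simp only [id]; ring
      _ < 0 := mul_neg_of_pos_of_neg hpow hinner
  constructor
  · intro L hL0 hL1
    obtain ⟨d, hd, hdneg⟩ := hD L hL0 hL1
    rw [hd.deriv]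
    exact hdneg
  · apply strictAntiOn_of_deriv_neg (convex_Ioo _ _)
    · intro x hx
      obtain ⟨d, hd, _⟩ := hD x hx.1 hx.2
      exact hd.continuousAt.continuousWithinAt
    · intro x hx
      rw [interior_Ioo] at hx
      obtain ⟨d, hd, hdneg⟩ := hD x hx.1 hx.2
      rw [hd.deriv]
      exact hdneg
end

section
/- For w > 0, B > 0, if L > (B/w)·ln 2 then the derivative of q̂(L) = (1 − exp(−w·L/B))^L with respect to L is strictly positive; that is, q̂ is strictly increasing on ((B/w)·ln 2, ∞). -/
open Real Set Filter

noncomputable def psiAux (t : ℝ) : ℝ := (1 - t) * Real.log (1 - t) - t * Real.log t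

lemma psiAux_hasDerivAt {x : ℝ} (hx : x ∈ Set.Ioo (0:ℝ) (1/2)) :
    HasDerivAt psiAux (-(Real.log (1 - x)) - Real.log x - 2) x := by
  have hx0 : x ≠ 0 := ne_of_gt hx.1
  have hx1 : (1:ℝ) - x ≠ 0 := by
    have := hx.2; intro h; nlinarith
  have h1 : HasDerivAt (fun t : ℝ => 1 - t) (-1) x := by
    exact (hasDerivAt_id' x).const_sub 1
  have h2 : HasDerivAt (fun t : ℝ => Real.log (1 - t)) (-1 / (1 - x)) x := by
    simpa using h1.log hx1
  have h3 : HasDerivAt (fun t : ℝ => (1 - t) * Real.log (1 - t))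
      ((-1) * Real.log (1 - x) + (1 - x) * (-1 / (1 - x))) x := h1.mul h2
  have h4 : HasDerivAt (fun t : ℝ => t * Real.log t)
      (1 * Real.log x + x * x⁻¹) x := (hasDerivAt_id x).mul (Real.hasDerivAt_log hx0)
  have h5 := h3.sub h4
  refine h5.congr_deriv ?_
  rw [mul_inv_cancel₀ hx0, mul_div_assoc', mul_neg_one, neg_div, div_self hx1]
  ring

lemma psiAux_concave : StrictConcaveOn ℝ (Set.Icc (0:ℝ) (1/2)) psiAux := by
  apply strictConcaveOn_of_deriv2_neg (convex_Icc _ _)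
  · have : Continuous psiAux := by
      have h1 : Continuous fun t : ℝ => (1 - t) * Real.log (1 - t) :=
        Real.continuous_mul_log.comp (continuous_const.sub continuous_id)
      exact h1.sub Real.continuous_mul_log
    exact this.continuousOn
  · intro x hx
    rw [interior_Icc] at hx
    have hmem : Set.Ioo (0:ℝ) (1/2) ∈ nhds x := isOpen_Ioo.mem_nhds hx
    have hev : deriv psiAux =ᶠ[nhds x]
        (fun t => -(Real.log (1 - t)) - Real.log t - 2) :=
      Filter.eventually_of_mem hmem fun y hy => (psiAux_hasDerivAt hy).deriv
    have h2 : deriv^[2] psiAux x = deriv (deriv psiAux) x := rfl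
    rw [h2, hev.deriv_eq]
    have hx0 : x ≠ 0 := ne_of_gt hx.1
    have hx1 : (1:ℝ) - x ≠ 0 := by
      have := hx.2; intro h; nlinarith
    have h1 : HasDerivAt (fun t : ℝ => 1 - t) (-1) x := by
      exact (hasDerivAt_id' x).const_sub 1
    have d1 : HasDerivAt (fun t : ℝ => -(Real.log (1 - t)) - Real.log t - 2)
        (-(-1 / (1 - x)) - x⁻¹ - 0) x := by
      exact (((h1.log hx1).neg).sub (Real.hasDerivAt_log hx0)).sub (hasDerivAt_const x 2)
    rw [d1.deriv]
    have hxlt : x < 1 - x := by linarith [hx.2]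
    have h1x : 0 < 1 - x := by linarith [hx.1]
    have : (1 - x)⁻¹ < x⁻¹ := by
      exact inv_strictAnti₀ hx.1 hxlt
    have e : -(-1 / (1 - x)) - x⁻¹ - 0 = (1 - x)⁻¹ - x⁻¹ := by
      field_simp
      ring
    rw [e]; linarith

lemma psiAux_pos {t : ℝ} (ht : t ∈ Set.Ioo (0:ℝ) (1/2)) : 0 < psiAux t := by
  have h0 : psiAux 0 = 0 := by simp [psiAux]
  have h12 : psiAux (1/2) = 0 := by norm_num [psiAux]
  have hxm : (0:ℝ) ∈ Set.Icc (0:ℝ) (1/2) := by norm_num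
  have hym : (1/2:ℝ) ∈ Set.Icc (0:ℝ) (1/2) := by norm_num
  have h := psiAux_concave.2 hxm hym (by norm_num)
    (show (0:ℝ) < 1 - 2*t by linarith [ht.2]) (show (0:ℝ) < 2*t by linarith [ht.1])
    (by ring)
  rw [h0, h12] at h
  simp only [smul_eq_mul, mul_zero, add_zero, smul_zero, zero_add] at h
  have e : 2*t*(1/2 : ℝ) = t := by ring
  rw [e] at h
  exact h

lemma qhat_key (w B : ℝ) (hw : 0 < w) (hB : 0 < B) {L : ℝ}
    (hL : (B / w) * Real.log 2 < L) :
    HasDerivAt (fun L : ℝ => (1 - Real.exp (-(w * L) / B)) ^ L)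
      (deriv (fun L : ℝ => (1 - Real.exp (-(w * L) / B)) ^ L) L) L ∧
    0 < deriv (fun L : ℝ => (1 - Real.exp (-(w * L) / B)) ^ L) L := by
  have hL0 : 0 < L :=
    lt_trans (mul_pos (div_pos hB hw) (Real.log_pos one_lt_two)) hL
  set t := Real.exp (-(w * L) / B) with ht_def
  have ht0 : 0 < t := Real.exp_pos _
  have hwlB : Real.log 2 < w * L / B := by
    rw [lt_div_iff₀ hB]
    calc Real.log 2 * B = w * (B / w * Real.log 2) := by field_simp
      _ < w * L := by exact (mul_lt_mul_iff_right₀ hw).2 hL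
  have ht12 : t < 1/2 := by
    have h2 : -(w * L) / B < -Real.log 2 := by
      rw [neg_div]; linarith
    calc t < Real.exp (-Real.log 2) := Real.exp_lt_exp.2 h2
      _ = 1/2 := by rw [Real.exp_neg, Real.exp_log (by norm_num : (0:ℝ) < 2)]; norm_num
  have hb0 : 0 < 1 - t := by linarith
  have hbne : (1:ℝ) - t ≠ 0 := ne_of_gt hb0
  -- derivative chain
  have h1 : HasDerivAt (fun x : ℝ => -(w * x) / B) (-w / B) L := by
    have := (((hasDerivAt_id L).const_mul w).neg).div_const B
    simpa using this
  have h2 : HasDerivAt (fun x : ℝ => Real.exp (-(w * x) / B)) (t * (-w / B)) L := by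
    simpa [ht_def] using h1.exp
  have h3 : HasDerivAt (fun x : ℝ => 1 - Real.exp (-(w * x) / B)) (-(t * (-w / B))) L := by
    exact h2.const_sub 1
  have h4 : HasDerivAt (fun x : ℝ => Real.log (1 - Real.exp (-(w * x) / B)))
      (-(t * (-w / B)) / (1 - t)) L := by
    simpa [ht_def] using h3.log (by simpa [ht_def] using hbne)
  have h5 : HasDerivAt (fun x : ℝ => Real.log (1 - Real.exp (-(w * x) / B)) * x)
      (-(t * (-w / B)) / (1 - t) * L + Real.log (1 - t) * 1) L := by
    exact h4.mul (hasDerivAt_id' L)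
  have h6 : HasDerivAt (fun x : ℝ => Real.exp (Real.log (1 - Real.exp (-(w * x) / B)) * x))
      (Real.exp (Real.log (1 - t) * L) * (-(t * (-w / B)) / (1 - t) * L + Real.log (1 - t) * 1)) L := by
    simpa [ht_def] using h5.exp
  have hev : (fun x : ℝ => (1 - Real.exp (-(w * x) / B)) ^ x)
      =ᶠ[nhds L] fun x => Real.exp (Real.log (1 - Real.exp (-(w * x) / B)) * x) := by
    filter_upwards [isOpen_Ioi.mem_nhds hL0] with x hx
    have hx1 : Real.exp (-(w * x) / B) < 1 := by
      rw [Real.exp_lt_one_iff]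
      have : 0 < w * x := mul_pos hw hx
      rw [neg_div]
      linarith [div_pos this hB]
    rw [Real.rpow_def_of_pos (by linarith)]
  have hD : HasDerivAt (fun L : ℝ => (1 - Real.exp (-(w * L) / B)) ^ L)
      (Real.exp (Real.log (1 - t) * L) * (-(t * (-w / B)) / (1 - t) * L + Real.log (1 - t) * 1)) L :=
    h6.congr_of_eventuallyEq hev
  have hderiv := hD.deriv
  refine ⟨by rw [hderiv]; exact hD, ?_⟩
  rw [hderiv]
  apply mul_pos (Real.exp_pos _)
  have hlogt : Real.log t = -(w * L) / B := Real.log_exp _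
  have hwl : w / B * L = -Real.log t := by
    rw [hlogt]; field_simp
  have key : -(t * (-w / B)) / (1 - t) * L + Real.log (1 - t) * 1
      = psiAux t / (1 - t) := by
    have e1 : -(t * (-w / B)) / (1 - t) * L = t * (w / B * L) / (1 - t) := by ring
    rw [e1, hwl, psiAux]
    field_simp
    ring
  rw [key]
  exact div_pos (psiAux_pos ⟨ht0, ht12⟩) hb0

/-- For `w > 0`, `B > 0`, on `L > (B/w) * log 2` the derivative of
`q̂ L = (1 - exp (-(w*L)/B)) ^ L` is strictly positive; that is, `q̂` is strictly
increasing on `((B/w) * log 2, ∞)`. -/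
theorem iou_qhat_strictMonoOn (w B : ℝ) (hw : 0 < w) (hB : 0 < B) :
    (∀ L : ℝ, (B / w) * Real.log 2 < L →
      0 < deriv (fun L : ℝ => (1 - Real.exp (-(w * L) / B)) ^ L) L) ∧
    StrictMonoOn (fun L : ℝ => (1 - Real.exp (-(w * L) / B)) ^ L)
      (Set.Ioi ((B / w) * Real.log 2)) := by
  refine ⟨fun L hL => (qhat_key w B hw hB hL).2, ?_⟩
  apply strictMonoOn_of_deriv_pos (convex_Ioi _)
  · intro x hx
    exact ((qhat_key w B hw hB hx).1).continuousAt.continuousWithinAt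
  · intro x hx
    rw [interior_Ioi] at hx
    exact (qhat_key w B hw hB hx).2
end

section
/- Let 0 < p ≤ 1, δ ∈ (0,1), K ≥ 1, and define R_K = ⌈(2pK + (1/2)ln(1/δ) + sqrt((2pK + (1/2)ln(1/δ))² − 4p²K²)) / (2p²)⌉. Then R_K is a real (well-defined) quantity: the expression under the square root, (2pK + (1/2)ln(1/δ))² − 4p²K², is nonnegative, and R_K satisfies p·R_K − sqrt((R_K/2)·ln(1/δ)) ≥ K. -/
open Real

/-- Well-definedness and correctness of the top-K sample size
`R_K = ⌈(2pK + (1/2)ln(1/δ) + sqrt((2pK + (1/2)ln(1/δ))² − 4p²K²)) / (2p²)⌉`: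
the discriminant is nonnegative and `p * R_K - sqrt ((R_K / 2) * log (1/δ)) ≥ K`. -/
theorem iou_topK_sample_size (p δ K : ℝ) (hp0 : 0 < p) (hp1 : p ≤ 1)
    (hδ : δ ∈ Set.Ioo (0 : ℝ) 1) (hK : 1 ≤ K) :
    0 ≤ (2 * p * K + (1 / 2) * Real.log (1 / δ)) ^ 2 - 4 * p ^ 2 * K ^ 2 ∧
    (let RK : ℝ :=
      ⌈(2 * p * K + (1 / 2) * Real.log (1 / δ) +
          Real.sqrt ((2 * p * K + (1 / 2) * Real.log (1 / δ)) ^ 2 -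
            4 * p ^ 2 * K ^ 2)) / (2 * p ^ 2)⌉₊
     p * RK - Real.sqrt ((RK / 2) * Real.log (1 / δ)) ≥ K) := by
  obtain ⟨hδ0, hδ1⟩ := hδ
  have hL : 0 < Real.log (1 / δ) := Real.log_pos (by rw [lt_div_iff₀ hδ0]; linarith)
  set L : ℝ := Real.log (1 / δ) with hLdef
  have hK0 : 0 < K := lt_of_lt_of_le one_pos hK
  have hb : (0:ℝ) < 2 * p * K + (1 / 2) * L := by positivity
  have hD : 0 ≤ (2 * p * K + (1 / 2) * L) ^ 2 - 4 * p ^ 2 * K ^ 2 := by nlinarith [sq_nonneg L, mul_pos (mul_pos hp0 hK0) hL]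
  refine ⟨hD, ?_⟩
  intro RK
  set s : ℝ := Real.sqrt ((2 * p * K + (1 / 2) * L) ^ 2 - 4 * p ^ 2 * K ^ 2) with hsdef
  have hs0 : 0 ≤ s := Real.sqrt_nonneg _
  have hs2 : s ^ 2 = (2 * p * K + (1 / 2) * L) ^ 2 - 4 * p ^ 2 * K ^ 2 := Real.sq_sqrt hD
  have hR : (2 * p * K + (1 / 2) * L + s) / (2 * p ^ 2) ≤ RK := Nat.le_ceil _
  have hp2 : (0:ℝ) < 2 * p ^ 2 := by positivity
  have hR' : 2 * p * K + (1 / 2) * L + s ≤ 2 * p ^ 2 * RK := by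
    rw [div_le_iff₀ hp2] at hR; linarith
  -- p * RK - K ≥ 0
  have hpRK : 0 ≤ p * RK - K := by nlinarith [sq_nonneg L, mul_pos (mul_pos hp0 hK0) hL]
  -- quadratic nonneg at RK
  have hquad : RK / 2 * L ≤ (p * RK - K) ^ 2 := by nlinarith [sq_nonneg (2 * p ^ 2 * RK - (2 * p * K + (1 / 2) * L) - s)]
  have := Real.sqrt_le_sqrt hquad
  rw [Real.sqrt_sq hpRK] at this
  linarith
end
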